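/- Let Γ be a linearly ordered, cancellative, additive commutative monoid and let R be a ring. If the Hahn series ring HahnSeries(Γ, R) is a left Archimedean domain, then R is a left Archimedean domain. -/

import Mathlib

/-- A ring `R` is *left Archimedean* if for every nonunit `a ∈ R`,
`⋂ n, aⁿ·R = {0}`. -/
def LeftArchimedean (R : Type*) [Ring R] : Prop :=
  ∀ a : R, ¬ IsUnit a → (⋂ n : ℕ, {x : R | ∃ r : R, x = a ^ n * r}) = {0}

theorem isUnit_of_C_isUnit {Γ : Type*} [AddCommMonoid Γ] [LinearOrder Γ] [IsOrderedCancelAddMonoid Γ] {R : Type*}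
    [Ring R] {a : R} (h : IsUnit (HahnSeries.C a : HahnSeries Γ R)) : IsUnit a := by
  obtain ⟨u, hu⟩ := h
  have h1 : (HahnSeries.C a : HahnSeries Γ R) * ↑u⁻¹ = 1 := by
    rw [← hu]; exact u.mul_inv
  have h2 : (↑u⁻¹ : HahnSeries Γ R) * HahnSeries.C a = 1 := by
    rw [← hu]; exact u.inv_mul
  have c1 : a * (↑u⁻¹ : HahnSeries Γ R).coeff 0 = 1 := by
    have := congrArg (fun x => HahnSeries.coeff x 0) h1
    simpa [HahnSeries.coeff_single_zero_mul] using this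
  have c2 : (↑u⁻¹ : HahnSeries Γ R).coeff 0 * a = 1 := by
    have := congrArg (fun x => HahnSeries.coeff x 0) h2
    simpa [HahnSeries.coeff_mul_single_zero] using this
  exact ⟨⟨a, (↑u⁻¹ : HahnSeries Γ R).coeff 0, c1, c2⟩, rfl⟩

/-- If the Hahn series ring `HahnSeries Γ R` is a left Archimedean domain, then `R`
is a left Archimedean domain. -/
theorem leftArchimedean_domain_of_hahnSeries (Γ : Type*)
    [AddCommMonoid Γ] [LinearOrder Γ] [IsOrderedCancelAddMonoid Γ] (R : Type*) [Ring R]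
    (hdom : IsDomain (HahnSeries Γ R)) (harch : LeftArchimedean (HahnSeries Γ R)) :
    IsDomain R ∧ LeftArchimedean R := by
  have Cinj : Function.Injective (HahnSeries.C : R → HahnSeries Γ R) :=
    HahnSeries.C_injective
  have hnt : Nontrivial R := by
    refine ⟨0, 1, fun h => ?_⟩
    have : (0 : HahnSeries Γ R) ≠ 1 := zero_ne_one
    apply this
    rw [← HahnSeries.C_zero, ← HahnSeries.C_one, h]
  constructor
  · have hl : IsLeftCancelMulZero R := by
      refine ⟨fun {a} ha ⦃b c⦄ (h : a * b = a * c) => ?_⟩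
      apply Cinj
      have : (HahnSeries.C a : HahnSeries Γ R) * HahnSeries.C b =
          HahnSeries.C a * HahnSeries.C c := by
        rw [← map_mul, ← map_mul, h]
      exact mul_left_cancel₀ (HahnSeries.C_ne_zero ha) this
    have hr : IsRightCancelMulZero R := by
      refine ⟨fun {b} hb ⦃a c⦄ (h : a * b = c * b) => ?_⟩
      apply Cinj
      have : (HahnSeries.C a : HahnSeries Γ R) * HahnSeries.C b =
          HahnSeries.C c * HahnSeries.C b := by
        rw [← map_mul, ← map_mul, h]
      exact mul_right_cancel₀ (HahnSeries.C_ne_zero hb) this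
    exact {}
  · intro a ha
    have hCa : ¬ IsUnit (HahnSeries.C a : HahnSeries Γ R) :=
      fun h => ha (isUnit_of_C_isUnit h)
    have key := harch _ hCa
    ext x
    simp only [Set.mem_iInter, Set.mem_setOf_eq, Set.mem_singleton_iff]
    constructor
    · intro hx
      have : (HahnSeries.C x : HahnSeries Γ R) ∈
          (⋂ n : ℕ, {y : HahnSeries Γ R | ∃ r, y = (HahnSeries.C a) ^ n * r}) := by
        simp only [Set.mem_iInter, Set.mem_setOf_eq]
        intro n
        obtain ⟨r, hr⟩ := hx n
        exact ⟨HahnSeries.C r, by rw [hr, map_mul, map_pow]⟩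
      rw [key] at this
      apply Cinj
      rw [this, HahnSeries.C_zero]
    · rintro rfl n
      exact ⟨0, by simp⟩
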